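/- For a graph U the following are equivalent: (1) there exist two graphs G and G' on the vertex set of U having the same 3-element homogeneous subsets such that U is the Boolean sum G ∔ G'; (2) both edge-graphs S(U) and S(Ū) are bipartite. -/

import Mathlib

open SimpleGraph

/-- The claw `K_{1,3}`: vertex 0 joined to each of the pairwise
    nonadjacent vertices 1, 2, 3. -/
def claw : SimpleGraph (Fin 4) := SimpleGraph.fromRel (fun a _ => a = 0)

/-- A graph is claw-free if it has no induced subgraph isomorphic to `K_{1,3}`. -/
def ClawFree {V : Type*} (G : SimpleGraph V) : Prop := IsEmpty (claw ↪g G)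

/-- The edge-graph `S(U)` of a graph `U`: its vertices are the edges of `U`,
    two edges `u = {x,y}` and `v = {x,z}` (with `x, y, z` distinct) being
    adjacent iff `{y,z}` is not an edge of `U`. -/
def edgeGraph {V : Type*} (U : SimpleGraph V) : SimpleGraph U.edgeSet :=
  SimpleGraph.fromRel (fun u v => ∃ x y z : V, x ≠ y ∧ x ≠ z ∧ y ≠ z ∧
    (u : Sym2 V) = s(x, y) ∧ (v : Sym2 V) = s(x, z) ∧ ¬ U.Adj y z)

/-- The Boolean sum `G ∔ G'` of two graphs on the same vertex set: its edge set
    is the symmetric difference of the edge sets of `G` and `G'`. -/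
def boolSum {V : Type*} (G G' : SimpleGraph V) : SimpleGraph V := G \ G' ⊔ G' \ G

/-- `G` and `G'` have the same 3-element homogeneous subsets (a set being
    homogeneous if it is a clique or an independent set). -/
def SameHomog3 {V : Type*} (G G' : SimpleGraph V) : Prop :=
  ∀ s : Finset V, s.card = 3 →
    ((G.IsClique (s : Set V) ∨ Gᶜ.IsClique (s : Set V)) ↔
      (G'.IsClique (s : Set V) ∨ G'ᶜ.IsClique (s : Set V)))

def mkG {V : Type*} (U : SimpleGraph V) (cU dU : Sym2 V → Fin 2) (i : Fin 2) :
    SimpleGraph V :=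
  SimpleGraph.fromRel
    (fun a b => (U.Adj a b ∧ cU s(a, b) = i) ∨ (¬U.Adj a b ∧ dU s(a, b) = 0))

lemma mkG_adj {V : Type*} (U : SimpleGraph V) (cU dU : Sym2 V → Fin 2) (i : Fin 2)
    (a b : V) : (mkG U cU dU i).Adj a b ↔ a ≠ b ∧
      ((U.Adj a b ∧ cU s(a, b) = i) ∨ (¬U.Adj a b ∧ dU s(a, b) = 0)) := by
  rw [mkG, fromRel_adj]
  constructor
  · rintro ⟨hne, h | h⟩
    · exact ⟨hne, h⟩
    · rw [U.adj_comm b a, show (s(b, a) : Sym2 V) = s(a, b) from Sym2.eq_swap] at h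
      exact ⟨hne, h⟩
  · rintro ⟨hne, h⟩; exact ⟨hne, Or.inl h⟩

lemma fin2_ne {t t' : Fin 2} (h : t ≠ t') : t = 0 ↔ ¬t' = 0 := by
  fin_cases t <;> fin_cases t' <;> simp_all

lemma fin2_not (t : Fin 2) : t = 1 ↔ ¬t = 0 := by fin_cases t <;> simp

-- the ≠ facts from colorings
lemma cNe {V : Type*} {U : SimpleGraph V} (c : (edgeGraph U).Coloring (Fin 2))
    {cU : Sym2 V → Fin 2} (hcU : ∀ (e : Sym2 V) (h : e ∈ U.edgeSet), cU e = c ⟨e, h⟩)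
    {x y z : V} (hxy : x ≠ y) (hxz : x ≠ z) (hyz : y ≠ z)
    (h1 : U.Adj x y) (h2 : U.Adj x z) (h3 : ¬U.Adj y z) :
    cU s(x, y) ≠ cU s(x, z) := by
  have e1 : s(x, y) ∈ U.edgeSet := h1
  have e2 : s(x, z) ∈ U.edgeSet := h2
  have hne : (⟨s(x, y), e1⟩ : U.edgeSet) ≠ ⟨s(x, z), e2⟩ := by
    intro h
    rw [Subtype.mk.injEq, Sym2.eq_iff] at h
    rcases h with ⟨-, h⟩ | ⟨h, -⟩
    · exact hyz h
    · exact hxz h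
  have hadj : (edgeGraph U).Adj ⟨s(x, y), e1⟩ ⟨s(x, z), e2⟩ := by
    rw [edgeGraph, fromRel_adj]
    exact ⟨hne, Or.inl ⟨x, y, z, hxy, hxz, hyz, rfl, rfl, h3⟩⟩
  have := c.valid hadj
  rw [hcU _ e1, hcU _ e2]
  exact this

def H3 {V : Type*} (G : SimpleGraph V) (x y z : V) : Prop :=
  (G.Adj x y ∧ G.Adj x z ∧ G.Adj y z) ∨ (¬G.Adj x y ∧ ¬G.Adj x z ∧ ¬G.Adj y z)

lemma homog_iff_H3 {V : Type*} [DecidableEq V] (G : SimpleGraph V) {x y z : V}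
    (hxy : x ≠ y) (hxz : x ≠ z) (hyz : y ≠ z) :
    (G.IsClique (↑({x, y, z} : Finset V)) ∨ Gᶜ.IsClique (↑({x, y, z} : Finset V))) ↔
      H3 G x y z := by
  have hc : ({x, y, z} : Finset V).card = 3 := by
    rw [Finset.card_insert_of_notMem (by simp [hxy, hxz]),
      Finset.card_insert_of_notMem (by simp [hyz]), Finset.card_singleton]
  have h1 : G.IsClique (↑({x, y, z} : Finset V)) ↔ G.Adj x y ∧ G.Adj x z ∧ G.Adj y z := by
    rw [show G.IsClique (↑({x, y, z} : Finset V)) ↔ G.IsNClique 3 {x, y, z} by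
      rw [isNClique_iff]; simp [hc]]
    exact is3Clique_triple_iff
  have h2 : Gᶜ.IsClique (↑({x, y, z} : Finset V)) ↔
      ¬G.Adj x y ∧ ¬G.Adj x z ∧ ¬G.Adj y z := by
    rw [show Gᶜ.IsClique (↑({x, y, z} : Finset V)) ↔ Gᶜ.IsNClique 3 {x, y, z} by
      rw [isNClique_iff]; simp [hc]]
    rw [is3Clique_triple_iff]
    simp [compl_adj, hxy, hxz, hyz]
  rw [h1, h2, H3]

section branches
variable {P1 P2 P3 Q1 Q2 Q3 r r1 r2 r3 s s2 s3 : Prop}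

lemma branchAll (b1 : Q1 ↔ ¬P1) (b2 : Q2 ↔ ¬P2) (b3 : Q3 ↔ ¬P3) :
    ((P1 ∧ P2 ∧ P3) ∨ (¬P1 ∧ ¬P2 ∧ ¬P3)) ↔ ((Q1 ∧ Q2 ∧ Q3) ∨ (¬Q1 ∧ ¬Q2 ∧ ¬Q3)) := by
  tauto

lemma branch12 (a1 : P1 ↔ r1) (a2 : P2 ↔ r2) (hx : r1 ↔ ¬r2)
    (b1 : Q1 ↔ ¬r1) (b2 : Q2 ↔ ¬r2) (a3 : P3 ↔ s) (b3 : Q3 ↔ s) :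
    ((P1 ∧ P2 ∧ P3) ∨ (¬P1 ∧ ¬P2 ∧ ¬P3)) ↔ ((Q1 ∧ Q2 ∧ Q3) ∨ (¬Q1 ∧ ¬Q2 ∧ ¬Q3)) := by
  tauto

lemma branch13 (a1 : P1 ↔ r1) (a3 : P3 ↔ r3) (hx : r1 ↔ ¬r3)
    (b1 : Q1 ↔ ¬r1) (b3 : Q3 ↔ ¬r3) (a2 : P2 ↔ s) (b2 : Q2 ↔ s) :
    ((P1 ∧ P2 ∧ P3) ∨ (¬P1 ∧ ¬P2 ∧ ¬P3)) ↔ ((Q1 ∧ Q2 ∧ Q3) ∨ (¬Q1 ∧ ¬Q2 ∧ ¬Q3)) := by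
  tauto

lemma branch23 (a2 : P2 ↔ r2) (a3 : P3 ↔ r3) (hx : r2 ↔ ¬r3)
    (b2 : Q2 ↔ ¬r2) (b3 : Q3 ↔ ¬r3) (a1 : P1 ↔ s) (b1 : Q1 ↔ s) :
    ((P1 ∧ P2 ∧ P3) ∨ (¬P1 ∧ ¬P2 ∧ ¬P3)) ↔ ((Q1 ∧ Q2 ∧ Q3) ∨ (¬Q1 ∧ ¬Q2 ∧ ¬Q3)) := by
  tauto

lemma branchE1 (a1 : P1 ↔ r) (b1 : Q1 ↔ ¬r) (a2 : P2 ↔ s2) (b2 : Q2 ↔ s2)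
    (a3 : P3 ↔ s3) (b3 : Q3 ↔ s3) (hx : s2 ↔ ¬s3) :
    ((P1 ∧ P2 ∧ P3) ∨ (¬P1 ∧ ¬P2 ∧ ¬P3)) ↔ ((Q1 ∧ Q2 ∧ Q3) ∨ (¬Q1 ∧ ¬Q2 ∧ ¬Q3)) := by
  tauto

lemma branchE2 (a2 : P2 ↔ r) (b2 : Q2 ↔ ¬r) (a1 : P1 ↔ s2) (b1 : Q1 ↔ s2)
    (a3 : P3 ↔ s3) (b3 : Q3 ↔ s3) (hx : s2 ↔ ¬s3) :
    ((P1 ∧ P2 ∧ P3) ∨ (¬P1 ∧ ¬P2 ∧ ¬P3)) ↔ ((Q1 ∧ Q2 ∧ Q3) ∨ (¬Q1 ∧ ¬Q2 ∧ ¬Q3)) := by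
  tauto

lemma branchE3 (a3 : P3 ↔ r) (b3 : Q3 ↔ ¬r) (a1 : P1 ↔ s2) (b1 : Q1 ↔ s2)
    (a2 : P2 ↔ s3) (b2 : Q2 ↔ s3) (hx : s2 ↔ ¬s3) :
    ((P1 ∧ P2 ∧ P3) ∨ (¬P1 ∧ ¬P2 ∧ ¬P3)) ↔ ((Q1 ∧ Q2 ∧ Q3) ∨ (¬Q1 ∧ ¬Q2 ∧ ¬Q3)) := by
  tauto

lemma branch0 (a1 : P1 ↔ s) (b1 : Q1 ↔ s) (a2 : P2 ↔ s2) (b2 : Q2 ↔ s2)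
    (a3 : P3 ↔ s3) (b3 : Q3 ↔ s3) :
    ((P1 ∧ P2 ∧ P3) ∨ (¬P1 ∧ ¬P2 ∧ ¬P3)) ↔ ((Q1 ∧ Q2 ∧ Q3) ∨ (¬Q1 ∧ ¬Q2 ∧ ¬Q3)) := by
  tauto

lemma boolcase1 {A B : Prop} (hA : A ↔ r) (hB : B ↔ ¬r) : (A ∧ ¬B) ∨ (B ∧ ¬A) := by
  tauto

end branches

theorem bwd {V : Type*} (U : SimpleGraph V)
    (h1 : (edgeGraph U).Colorable 2) (h2 : (edgeGraph Uᶜ).Colorable 2) :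
    ∃ G G' : SimpleGraph V, SameHomog3 G G' ∧ U = boolSum G G' := by
  classical
  obtain ⟨c⟩ := h1
  obtain ⟨d⟩ := h2
  set cU : Sym2 V → Fin 2 := fun e => if h : e ∈ U.edgeSet then c ⟨e, h⟩ else 0 with hcUdef
  set dU : Sym2 V → Fin 2 := fun e => if h : e ∈ Uᶜ.edgeSet then d ⟨e, h⟩ else 0 with hdUdef
  have hcU : ∀ (e : Sym2 V) (h : e ∈ U.edgeSet), cU e = c ⟨e, h⟩ := fun e h => dif_pos h
  have hdU : ∀ (e : Sym2 V) (h : e ∈ Uᶜ.edgeSet), dU e = d ⟨e, h⟩ := fun e h => dif_pos h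
  have hGU : ∀ a b, U.Adj a b → ((mkG U cU dU 0).Adj a b ↔ cU s(a, b) = 0) := by
    intro a b h; rw [mkG_adj]; have hne := h.ne; tauto
  have hG'U : ∀ a b, U.Adj a b → ((mkG U cU dU 1).Adj a b ↔ ¬cU s(a, b) = 0) := by
    intro a b h; rw [mkG_adj]
    have hne := h.ne
    have := fin2_not (cU s(a, b))
    tauto
  have hGn : ∀ (i : Fin 2) a b, a ≠ b → ¬U.Adj a b →
      ((mkG U cU dU i).Adj a b ↔ dU s(a, b) = 0) := by
    intro i a b hne h; rw [mkG_adj]; tauto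
  refine ⟨mkG U cU dU 0, mkG U cU dU 1, ?_, ?_⟩
  · -- SameHomog3
    intro s hs
    obtain ⟨x, y, z, hxy, hxz, hyz, rfl⟩ := Finset.card_eq_three.mp hs
    rw [homog_iff_H3 _ hxy hxz hyz, homog_iff_H3 _ hxy hxz hyz]
    simp only [H3]
    by_cases p1 : U.Adj x y <;> by_cases p2 : U.Adj x z <;> by_cases p3 : U.Adj y z
    · -- TTT
      exact branchAll (Iff.trans (hG'U x y p1) (not_congr (hGU x y p1).symm))
        (Iff.trans (hG'U x z p2) (not_congr (hGU x z p2).symm))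
        (Iff.trans (hG'U y z p3) (not_congr (hGU y z p3).symm))
    · -- TTF
      exact branch12 (hGU x y p1) (hGU x z p2) (fin2_ne (cNe c hcU hxy hxz hyz p1 p2 p3))
        (hG'U x y p1) (hG'U x z p2) (hGn 0 y z hyz p3) (hGn 1 y z hyz p3)
    · -- TFT
      have hx := cNe c hcU hxy.symm hyz hxz ((U.adj_comm x y).mp p1) p3 p2
      rw [show (s(y, x) : Sym2 V) = s(x, y) from Sym2.eq_swap] at hx
      exact branch13 (hGU x y p1) (hGU y z p3) (fin2_ne hx)
        (hG'U x y p1) (hG'U y z p3) (hGn 0 x z hxz p2) (hGn 1 x z hxz p2)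
    · -- TFF : only edge xy, center z for d
      have hx := cNe (U := Uᶜ) d hdU hxz.symm hyz.symm hxy
        ⟨hxz.symm, fun h => p2 ((U.adj_comm z x).mp h)⟩
        ⟨hyz.symm, fun h => p3 ((U.adj_comm z y).mp h)⟩
        (fun h => h.2 p1)
      rw [show (s(z, x) : Sym2 V) = s(x, z) from Sym2.eq_swap,
        show (s(z, y) : Sym2 V) = s(y, z) from Sym2.eq_swap] at hx
      exact branchE1 (hGU x y p1) (hG'U x y p1)
        (hGn 0 x z hxz p2) (hGn 1 x z hxz p2)
        (hGn 0 y z hyz p3) (hGn 1 y z hyz p3) (fin2_ne hx)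
    · -- FTT : edges xz, yz; center z for c
      have hx := cNe c hcU hxz.symm hyz.symm hxy
        ((U.adj_comm x z).mp p2) ((U.adj_comm y z).mp p3) p1
      rw [show (s(z, x) : Sym2 V) = s(x, z) from Sym2.eq_swap,
        show (s(z, y) : Sym2 V) = s(y, z) from Sym2.eq_swap] at hx
      exact branch23 (hGU x z p2) (hGU y z p3) (fin2_ne hx)
        (hG'U x z p2) (hG'U y z p3) (hGn 0 x y hxy p1) (hGn 1 x y hxy p1)
    · -- FTF : only edge xz, center y for d
      have hx := cNe (U := Uᶜ) d hdU hxy.symm hyz hxz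
        ⟨hxy.symm, fun h => p1 ((U.adj_comm y x).mp h)⟩
        ⟨hyz, p3⟩ (fun h => h.2 p2)
      rw [show (s(y, x) : Sym2 V) = s(x, y) from Sym2.eq_swap] at hx
      exact branchE2 (hGU x z p2) (hG'U x z p2)
        (hGn 0 x y hxy p1) (hGn 1 x y hxy p1)
        (hGn 0 y z hyz p3) (hGn 1 y z hyz p3) (fin2_ne hx)
    · -- FFT : only edge yz, center x for d
      have hx := cNe (U := Uᶜ) d hdU hxy hxz hyz ⟨hxy, p1⟩ ⟨hxz, p2⟩ (fun h => h.2 p3)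
      exact branchE3 (hGU y z p3) (hG'U y z p3)
        (hGn 0 x y hxy p1) (hGn 1 x y hxy p1)
        (hGn 0 x z hxz p2) (hGn 1 x z hxz p2) (fin2_ne hx)
    · -- FFF
      exact branch0 (hGn 0 x y hxy p1) (hGn 1 x y hxy p1)
        (hGn 0 x z hxz p2) (hGn 1 x z hxz p2)
        (hGn 0 y z hyz p3) (hGn 1 y z hyz p3)
  · -- U = boolSum
    ext a b
    simp only [boolSum, sup_adj, sdiff_adj]
    by_cases h : U.Adj a b
    · exact iff_of_true h (boolcase1 (hGU a b h) (hG'U a b h))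
    · refine iff_of_false h ?_
      rintro (⟨hA, hB⟩ | ⟨hA, hB⟩)
      · exact hB ((hGn 1 a b hA.ne h).mpr ((hGn 0 a b hA.ne h).mp hA))
      · exact hB ((hGn 0 a b hA.ne h).mpr ((hGn 1 a b hA.ne h).mp hA))

lemma sameHomog3_H3 {V : Type*} {G G' : SimpleGraph V} (hS : SameHomog3 G G')
    {x y z : V} (hxy : x ≠ y) (hxz : x ≠ z) (hyz : y ≠ z) :
    H3 G x y z ↔ H3 G' x y z := by
  classical
  have hc : ({x, y, z} : Finset V).card = 3 := by
    rw [Finset.card_insert_of_notMem (by simp [hxy, hxz]),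
      Finset.card_insert_of_notMem (by simp [hyz]), Finset.card_singleton]
  have := hS {x, y, z} hc
  rwa [homog_iff_H3 G hxy hxz hyz, homog_iff_H3 G' hxy hxz hyz] at this

lemma core_c {p1 p2 p3 q1 q2 q3 : Prop}
    (h1 : (p1 ∧ ¬q1) ∨ (q1 ∧ ¬p1)) (h2 : (p2 ∧ ¬q2) ∨ (q2 ∧ ¬p2))
    (h3 : ¬((p3 ∧ ¬q3) ∨ (q3 ∧ ¬p3)))
    (e : (p1 ∧ p2 ∧ p3) ∨ (¬p1 ∧ ¬p2 ∧ ¬p3) ↔ (q1 ∧ q2 ∧ q3) ∨ (¬q1 ∧ ¬q2 ∧ ¬q3)) :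
    (p1 ↔ ¬p2) := by tauto

lemma core_d {p1 p2 p3 q1 q2 q3 : Prop}
    (h1 : p1 ↔ q1) (h2 : p2 ↔ q2)
    (h3 : (p3 ∧ ¬q3) ∨ (q3 ∧ ¬p3))
    (e : (p1 ∧ p2 ∧ p3) ∨ (¬p1 ∧ ¬p2 ∧ ¬p3) ↔ (q1 ∧ q2 ∧ q3) ∨ (¬q1 ∧ ¬q2 ∧ ¬q3)) :
    (p1 ↔ ¬p2) := by tauto

theorem fwd {V : Type*} (U : SimpleGraph V)
    (G G' : SimpleGraph V) (hS : SameHomog3 G G') (hU : U = boolSum G G') :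
    ((edgeGraph U).Colorable 2 ∧ (edgeGraph Uᶜ).Colorable 2) := by
  classical
  have hUadj : ∀ a b : V, U.Adj a b ↔ (G.Adj a b ∧ ¬G'.Adj a b) ∨ (G'.Adj a b ∧ ¬G.Adj a b) := by
    intro a b; rw [hU]; simp [boolSum, sup_adj, sdiff_adj]
  refine ⟨?_, ?_⟩
  · -- S(U) bipartite
    have key : ∀ (a b : U.edgeSet), (∃ x y z : V, x ≠ y ∧ x ≠ z ∧ y ≠ z ∧
        (a : Sym2 V) = s(x, y) ∧ (b : Sym2 V) = s(x, z) ∧ ¬ U.Adj y z) →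
        (if (a : Sym2 V) ∈ G.edgeSet then (0 : Fin 2) else 1) ≠
        (if (b : Sym2 V) ∈ G.edgeSet then (0 : Fin 2) else 1) := by
      rintro a b ⟨x, y, z, hxy, hxz, hyz, ha, hb, hnU⟩
      have haU : U.Adj x y := by
        have := a.2; rw [ha] at this; exact this
      have hbU : U.Adj x z := by
        have := b.2; rw [hb] at this; exact this
      have hkey : G.Adj x y ↔ ¬G.Adj x z := by
        refine core_c ((hUadj x y).1 haU) ((hUadj x z).1 hbU)
          (fun h => hnU ((hUadj y z).2 h)) ?_
        exact sameHomog3_H3 hS hxy hxz hyz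
      rw [ha, hb]
      simp only [mem_edgeSet]
      by_cases h : G.Adj x y
      · have h2 : ¬ G.Adj x z := hkey.1 h
        simp [h, h2]
      · have h2 : G.Adj x z := by_contra fun h2 => h (hkey.2 h2)
        simp [h, h2]
    exact ⟨Coloring.mk (fun e => if (e : Sym2 V) ∈ G.edgeSet then (0 : Fin 2) else 1)
      (by rintro a b ⟨hne, h | h⟩
          · exact key a b h
          · exact (key b a h).symm)⟩
  · -- S(U compl) bipartite
    have key : ∀ (a b : Uᶜ.edgeSet), (∃ x y z : V, x ≠ y ∧ x ≠ z ∧ y ≠ z ∧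
        (a : Sym2 V) = s(x, y) ∧ (b : Sym2 V) = s(x, z) ∧ ¬ Uᶜ.Adj y z) →
        (if (a : Sym2 V) ∈ G.edgeSet then (0 : Fin 2) else 1) ≠
        (if (b : Sym2 V) ∈ G.edgeSet then (0 : Fin 2) else 1) := by
      rintro a b ⟨x, y, z, hxy, hxz, hyz, ha, hb, hnUc⟩
      have haU : Uᶜ.Adj x y := by
        have := a.2; rw [ha] at this; exact this
      have hbU : Uᶜ.Adj x z := by
        have := b.2; rw [hb] at this; exact this
      have hyzU : U.Adj y z := by
        by_contra h
        exact hnUc ((compl_adj U y z).2 ⟨hyz, h⟩)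
      have h1 : G.Adj x y ↔ G'.Adj x y := by
        have hn : ¬ U.Adj x y := haU.2
        rw [hUadj] at hn; tauto
      have h2 : G.Adj x z ↔ G'.Adj x z := by
        have hn : ¬ U.Adj x z := hbU.2
        rw [hUadj] at hn; tauto
      have hkey : G.Adj x y ↔ ¬G.Adj x z := by
        refine core_d h1 h2 ((hUadj y z).1 hyzU) ?_
        exact sameHomog3_H3 hS hxy hxz hyz
      rw [ha, hb]
      simp only [mem_edgeSet]
      by_cases h : G.Adj x y
      · have h2' : ¬ G.Adj x z := hkey.1 h
        simp [h, h2']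
      · have h2' : G.Adj x z := by_contra fun h2' => h (hkey.2 h2')
        simp [h, h2']
    exact ⟨Coloring.mk (fun e => if (e : Sym2 V) ∈ G.edgeSet then (0 : Fin 2) else 1)
      (by rintro a b ⟨hne, h | h⟩
          · exact key a b h
          · exact (key b a h).symm)⟩

/-- `U` is the Boolean sum of two graphs having the same 3-element homogeneous
    subsets iff the edge-graphs `S(U)` and `S(Ūᶜ)` are both bipartite. -/
theorem boolSum_iff_edgeGraphs_bipartite {V : Type*} [Fintype V] (U : SimpleGraph V) :
    (∃ G G' : SimpleGraph V, SameHomog3 G G' ∧ U = boolSum G G') ↔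
      ((edgeGraph U).Colorable 2 ∧ (edgeGraph Uᶜ).Colorable 2) := by
  constructor
  · rintro ⟨G, G', hS, hU⟩
    exact fwd U G G' hS hU
  · rintro ⟨h1, h2⟩
    exact bwd U h1 h2
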